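/- Let λ > 0, let r ∈ ℕ, let a : Fin (r+1) → AddCircle λ be a family of points on the circle ℝ/λℤ, let ã : Fin (r+1) → ℝ be a family of real numbers, and let ε > 0, C > 0 and η > 0. Then for every K ∈ ℕ there exists a natural number k ≥ K such that: (i) dist(k • a_i, 0) < ε for every i; (ii) for every i, either ã_i = ã_0 or k·|ã_i − ã_0| > C; and (iii) k > C/η. -/
import Mathlib


/-- Simultaneous recurrence on the circle `ℝ/λℤ` together with separation of augmented
actions: given points `a i` on the circle, real numbers `ã i`, and constants
`ε, C, η > 0`, there exist arbitrarily large `k ∈ ℕ` such that `dist (k • a i, 0) < ε`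
for all `i`; for each `i` either `ã i = ã 0` or `k * |ã i - ã 0| > C`; and `k > C / η`. -/
theorem exists_large_iterate_recurrence (lam : ℝ) (hlam : 0 < lam) (r : ℕ)
    (a : Fin (r + 1) → AddCircle lam) (atilde : Fin (r + 1) → ℝ)
    (ε C η : ℝ) (hε : 0 < ε) (hC : 0 < C) (hη : 0 < η) :
    ∀ K : ℕ, ∃ k : ℕ, K ≤ k ∧
      (∀ i : Fin (r + 1), dist (k • a i) 0 < ε) ∧
      (∀ i : Fin (r + 1), atilde i = atilde 0 ∨ C < (k : ℝ) * |atilde i - atilde 0|) ∧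
      C / η < (k : ℝ) := by
  haveI : Fact (0 < lam) := ⟨hlam⟩
  intro K
  -- choose a large M
  obtain ⟨M0, hM0⟩ := exists_nat_gt (max (C / η)
      (Finset.univ.sup' ⟨0, Finset.mem_univ 0⟩ (fun i => C / |atilde i - atilde 0|)))
  set M := max M0 (max K 1) with hMdef
  have hM1 : 1 ≤ M := le_max_of_le_right (le_max_right _ _)
  have hMK : K ≤ M := le_max_of_le_right (le_max_left _ _)
  have hM0M : M0 ≤ M := le_max_left _ _
  -- pigeonhole in the compact product space
  have hcomp : IsCompact (Set.univ : Set (Fin (r + 1) → AddCircle lam)) := isCompact_univ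
  obtain ⟨t, htfin, htcov⟩ := (Metric.totallyBounded_iff.mp hcomp.totallyBounded) (ε / 2) (by positivity)
  set f : ℕ → (Fin (r + 1) → AddCircle lam) := fun j => (M * j) • a with hf
  have hmem : ∀ j : ℕ, ∃ y, ∃ _ : y ∈ t, f j ∈ Metric.ball y (ε / 2) := by
    intro j
    have := htcov (Set.mem_univ (f j))
    simpa using this
  choose g hg hg' using hmem
  haveI : Finite t := htfin
  obtain ⟨j, j', hne, heq⟩ :=
    Finite.exists_ne_map_eq_of_infinite (fun j : ℕ => (⟨g j, hg j⟩ : t))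
  have heq' : g j = g j' := by simpa using congrArg Subtype.val heq
  -- wlog j < j'
  wlog hlt : j < j' generalizing j j'
  · exact this j' j hne.symm heq.symm heq'.symm (by omega)
  -- the two points f j, f j' are ε-close
  have hdist : dist (f j') (f j) < ε := by
    calc dist (f j') (f j) ≤ dist (f j') (g j') + dist (g j') (f j) := dist_triangle _ _ _
    _ < ε / 2 + ε / 2 := by
        apply add_lt_add
        · simpa [dist_comm] using hg' j'
        · rw [← heq']
          simpa [dist_comm] using hg' j
    _ = ε := by ring
  have hMk : M ≤ M * (j' - j) := Nat.le_mul_of_pos_right M (by omega)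
  refine ⟨M * (j' - j), ?_, ?_, ?_, ?_⟩
  · exact le_trans hMK hMk
  · intro i
    have h1 : dist (f j' i) (f j i) < ε := lt_of_le_of_lt (dist_le_pi_dist _ _ i) hdist
    have h2 : f j' i = (M * (j' - j)) • a i + (M * j) • a i := by
      rw [hf]
      simp only [Pi.smul_apply]
      rw [← add_nsmul]
      congr 1
      rw [← Nat.mul_add, Nat.sub_add_cancel hlt.le]
    have h3 : dist ((M * (j' - j)) • a i) (0 : AddCircle lam) =
        dist (f j' i) (f j i) := by
      rw [h2, hf]
      simp only
      rw [← dist_add_right ((M * (j' - j)) • a i) 0 ((M * j) • a i), zero_add]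
      simp [Pi.smul_apply]
    rw [h3]; exact h1
  · intro i
    rcases eq_or_ne (atilde i) (atilde 0) with h | h
    · exact Or.inl h
    · right
      have hd : 0 < |atilde i - atilde 0| := by
        rw [abs_pos, sub_ne_zero]; exact h
      have hsup : C / |atilde i - atilde 0| ≤
          Finset.univ.sup' ⟨0, Finset.mem_univ 0⟩ (fun i => C / |atilde i - atilde 0|) :=
        Finset.le_sup' (fun i => C / |atilde i - atilde 0|) (Finset.mem_univ i)
      have hk : C / |atilde i - atilde 0| < (M * (j' - j) : ℕ) := by
        calc C / |atilde i - atilde 0| ≤ _ := hsup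
        _ ≤ max (C / η) _ := le_max_right _ _
        _ < M0 := hM0
        _ ≤ ((M * (j' - j) : ℕ) : ℝ) := by
            have : M0 ≤ M * (j' - j) := le_trans hM0M hMk
            exact_mod_cast this
      rw [div_lt_iff₀ hd] at hk
      linarith [hk]
  · have : C / η < (M0 : ℝ) := lt_of_le_of_lt (le_max_left _ _) hM0
    calc C / η < (M0 : ℝ) := this
    _ ≤ ((M * (j' - j) : ℕ) : ℝ) := by
        have : M0 ≤ M * (j' - j) := le_trans hM0M hMk
        exact_mod_cast this
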